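/- arXiv:1407.3164 — 2 statements merged into one kernel-verified Lean document; each statement's English description precedes it below -/
import Mathlib

section
/- Let G = □_{i∈I} G_i be a connected simple Cartesian product graph. Then R is a finest RSP-relation on E(G) if and only if R = □_{i∈I} R_i is the product of relations R_i, where each R_i is a finest RSP-relation on E(G_i). -/
open SimpleGraph

variable {V : Type*}

/-- An equivalence relation on a set `E` of edges: reflexive on `E`, symmetric, transitive,
and only relating elements of `E`. -/
structure IsEquivOn (R : Sym2 V → Sym2 V → Prop) (E : Set (Sym2 V)) : Prop where
  refl : ∀ e ∈ E, R e e
  symm : ∀ {e f}, R e f → R f e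
  trans : ∀ {e f g}, R e f → R f g → R e g
  mem_left : ∀ {e f}, R e f → e ∈ E
  mem_right : ∀ {e f}, R e f → f ∈ E

/-- `R` is an RSP-relation on `G`: an equivalence relation on `E(G)` such that any two adjacent
edges in distinct classes span a square (4-cycle) with opposite edges in the same class. -/
def IsRSP (G : SimpleGraph V) (R : Sym2 V → Sym2 V → Prop) : Prop :=
  IsEquivOn R G.edgeSet ∧
  ∀ x y z : V, G.Adj x y → G.Adj x z → y ≠ z → ¬ R s(x, y) s(x, z) →
    ∃ w : V, w ≠ x ∧ w ≠ y ∧ w ≠ z ∧ G.Adj y w ∧ G.Adj z w ∧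
      R s(x, y) s(z, w) ∧ R s(x, z) s(y, w)

/-- A finest RSP-relation: an RSP-relation such that every finer RSP-relation coincides
with it. -/
def IsFinestRSP (G : SimpleGraph V) (R : Sym2 V → Sym2 V → Prop) : Prop :=
  IsRSP G R ∧ ∀ S : Sym2 V → Sym2 V → Prop, IsRSP G S →
    (∀ e f, S e f → R e f) → (∀ e f, R e f → S e f)

/-- The Cartesian product of an indexed family of simple graphs. -/
def cartProd {I : Type*} {W : I → Type*} (G : ∀ i, SimpleGraph (W i)) :
    SimpleGraph (∀ i, W i) where
  Adj x y := ∃ j, (G j).Adj (x j) (y j) ∧ ∀ i, i ≠ j → x i = y i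
  symm := ⟨by
    rintro x y ⟨j, h1, h2⟩
    exact ⟨j, h1.symm, fun i hi => (h2 i hi).symm⟩⟩
  loopless := ⟨by
    rintro x ⟨j, h1, -⟩
    exact (G j).loopless.irrefl _ h1⟩

/-- The product relation `□ᵢ Rᵢ` on the edge set of a Cartesian product: two edges are
related iff they belong to the same factor direction `j` and their `j`-projections are
related by `Rⱼ`. -/
def prodRel {I : Type*} {W : I → Type*} (G : ∀ i, SimpleGraph (W i))
    (Rel : ∀ i, Sym2 (W i) → Sym2 (W i) → Prop)
    (e f : Sym2 (∀ i, W i)) : Prop :=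
  ∃ j, ∃ x y u v : ∀ i, W i, e = s(x, y) ∧ f = s(u, v) ∧
    (G j).Adj (x j) (y j) ∧ (∀ i, i ≠ j → x i = y i) ∧
    (G j).Adj (u j) (v j) ∧ (∀ i, i ≠ j → u i = v i) ∧
    Rel j s(x j, y j) s(u j, v j)



namespace RSPAux


open Classical in
noncomputable def upd {I : Type*} {W : I → Sort*} (x : ∀ i, W i) (j : I) (a : W j) :
    ∀ i, W i := fun i => if h : i = j then h ▸ a else x i

theorem upd_same {I : Type*} {W : I → Sort*} (x : ∀ i, W i) (j : I) (a : W j) :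
    upd x j a j = a := by simp [upd]

theorem upd_ne {I : Type*} {W : I → Sort*} {i j : I} (h : i ≠ j) (x : ∀ i, W i) (a : W j) :
    upd x j a i = x i := by simp [upd, h]

variable {I : Type*} {W : I → Type*} (G : ∀ i, SimpleGraph (W i))

/-- `x` and `y` differ exactly in coordinate `j`, where they are adjacent. -/
def Dir (j : I) (x y : ∀ i, W i) : Prop :=
  (G j).Adj (x j) (y j) ∧ ∀ i, i ≠ j → x i = y i

variable {G}

theorem Dir.adj {j x y} (h : Dir G j x y) : (cartProd G).Adj x y := ⟨j, h.1, h.2⟩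

theorem Dir.symm {j x y} (h : Dir G j x y) : Dir G j y x :=
  ⟨h.1.symm, fun i hi => (h.2 i hi).symm⟩

theorem Dir.ne {j x y} (h : Dir G j x y) : x ≠ y := fun he => h.1.ne (congrFun he j)

theorem dir_unique {j k x y} (hj : Dir G j x y) (hk : Dir G k x y) : j = k := by
  by_contra h
  exact hk.1.ne (hj.2 k (Ne.symm h))

theorem sym2_proj (j : I) {x y u v : ∀ i, W i} (h : s(x, y) = s(u, v)) :
    (s(x j, y j) : Sym2 (W j)) = s(u j, v j) := by
  have := congrArg (Sym2.map (fun t => t j)) h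
  simpa using this

theorem sym2_both_eq {α : Type*} {a c d : α} (h : s(a, a) = s(c, d)) : c = d := by
  rcases Sym2.eq_iff.mp h with ⟨rfl, rfl⟩ | ⟨rfl, rfl⟩ <;> rfl

/-- Corner uniqueness: if `x→y` is in direction `j`, `x→z` in direction `k ≠ j`, then
the only common neighbor of `y` and `z` other than `x` is the corner of the square. -/
theorem corner_unique {j k x y z w} (hjk : j ≠ k) (hxy : Dir G j x y) (hxz : Dir G k x z)
    (hwx : w ≠ x) (hyw : (cartProd G).Adj y w) (hzw : (cartProd G).Adj z w) :
    w = upd y k (z k) := by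
  obtain ⟨a, hya, hyoff⟩ := hyw
  obtain ⟨b, hzb, hzoff⟩ := hzw
  have hzj : z j = x j := (hxz.2 j hjk).symm
  have hyk : y k = x k := (hxy.2 k (Ne.symm hjk)).symm
  have ha : a = k := by
    by_contra hak
    rcases eq_or_ne a j with rfl | haj
    · -- a = j : then w = x, contradiction
      have hbk : b = k := by
        by_contra hbk
        have h1 : z k = w k := hzoff k (Ne.symm hbk)
        have h2 : y k = w k := hyoff k (Ne.symm hak)
        exact hxz.1.ne (hyk ▸ h2 ▸ h1.symm)
      apply hwx
      funext i
      rcases eq_or_ne i a with rfl | hia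
      · -- i = a = j
        have h1 : z i = w i := hzoff i (fun h => hjk (h ▸ hbk ▸ rfl))
        rw [← h1, hzj]
      · rw [← hyoff i hia, ← hxy.2 i hia]
    · -- a ≠ j, a ≠ k
      have hbj : b = j := by
        by_contra hbj
        have h1 : z j = w j := hzoff j (Ne.symm hbj)
        have h2 : y j = w j := hyoff j (Ne.symm haj)
        exact hxy.1.ne (hzj ▸ h2 ▸ h1.symm).symm
      have h1 : z a = w a := hzoff a (fun h => haj (h.trans hbj))
      have h2 : x a = z a := hxz.2 a hak
      have h3 : x a = y a := hxy.2 a haj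
      exact hya.ne (h3 ▸ h2 ▸ h1)
  subst ha
  have hbj : b = j := by
    by_contra hbj
    have h1 : z j = w j := hzoff j (Ne.symm hbj)
    have h2 : y j = w j := hyoff j hjk
    exact hxy.1.ne (hzj ▸ h2 ▸ h1.symm).symm
  subst hbj
  funext i
  rcases eq_or_ne i a with rfl | hia
  · rw [upd_same, ← hzoff i (fun h => hjk h.symm)]
  · rw [upd_ne hia, ← hyoff i hia]

/-- Same-direction square confinement: a square over two direction-`j` edges at `x`
stays in the `j`-fiber. -/
theorem fiber_confine {j x y z w} (hxy : Dir G j x y) (hxz : Dir G j x z)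
    (hyz : y j ≠ z j) (hyw : (cartProd G).Adj y w) (hzw : (cartProd G).Adj z w) :
    (∀ i, i ≠ j → w i = x i) ∧ (G j).Adj (y j) (w j) ∧ (G j).Adj (z j) (w j) := by
  obtain ⟨a, hya, hyoff⟩ := hyw
  obtain ⟨b, hzb, hzoff⟩ := hzw
  have ha : a = j := by
    by_contra haj
    rcases eq_or_ne b j with rfl | hbj
    · -- a ≠ j, b = j : w a = y a contradiction
      have h1 : z a = w a := hzoff a haj
      have h2 : x a = z a := hxz.2 a haj
      have h3 : x a = y a := hxy.2 a haj
      exact hya.ne (h3 ▸ h2 ▸ h1)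
    · -- a ≠ j, b ≠ j : w j = y j and w j = z j
      have h1 : y j = w j := hyoff j (Ne.symm haj)
      have h2 : z j = w j := hzoff j (Ne.symm hbj)
      exact hyz (h1.trans h2.symm)
  subst ha
  have hb : b = a := by
    by_contra hbj
    have h1 : y b = w b := hyoff b (fun h => hbj h)
    have h2 : x b = z b := hxz.2 b (fun h => hbj h)
    have h3 : x b = y b := hxy.2 b (fun h => hbj h)
    exact hzb.ne (h2.symm.trans (h3.trans h1))
  subst hb
  exact ⟨fun i hi => (hyoff i hi).symm.trans (hxy.2 i hi).symm, hya, hzb⟩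


variable {I : Type*} {W : I → Type*} {G : ∀ i, SimpleGraph (W i)}

theorem upd_self {j : I} (x : ∀ i, W i) : upd x j (x j) = x := by
  funext i
  rcases eq_or_ne i j with rfl | h
  · rw [upd_same]
  · rw [upd_ne h]

theorem Dir.upd_eq {j x y} (h : Dir G j x y) : upd x j (y j) = y := by
  funext i
  rcases eq_or_ne i j with rfl | hij
  · rw [upd_same]
  · rw [upd_ne hij]; exact h.2 i hij

theorem dir_step {k : I} {x : ∀ i, W i} {c : W k} (h : (G k).Adj (x k) c) :
    Dir G k x (upd x k c) :=
  ⟨by rw [upd_same]; exact h, fun i hi => (upd_ne hi _ _).symm⟩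

theorem Dir.upd_par {j k : I} {x y : ∀ i, W i} (hxy : Dir G j x y) (hkj : k ≠ j) (c : W k) :
    Dir G j (upd x k c) (upd y k c) := by
  refine ⟨by rw [upd_ne hkj.symm, upd_ne hkj.symm]; exact hxy.1, fun i hi => ?_⟩
  rcases eq_or_ne i k with rfl | hik
  · rw [upd_same, upd_same]
  · rw [upd_ne hik, upd_ne hik]; exact hxy.2 i hi

/-- Key lemma: any RSP-relation on a Cartesian product relates opposite edges of any
square whose sides point in two different directions. -/
theorem parallel {R} (hR : IsRSP (cartProd G) R) {j k : I} {x y z w : ∀ i, W i}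
    (hjk : j ≠ k) (hxy : Dir G j x y) (hxz : Dir G k x z)
    (hzw : Dir G j z w) (hyw : Dir G k y w) :
    R s(x, y) s(z, w) := by
  have hzj : z j = x j := (hxz.2 j hjk).symm
  have hwj : w j = y j := (hyw.2 j hjk).symm
  have hyk : y k = x k := (hxy.2 k hjk.symm).symm
  have hwk : w k = z k := (hzw.2 k hjk.symm).symm
  by_cases h : R s(x, y) s(x, z)
  · by_cases h2 : R s(z, w) s(z, x)
    · have h2' : R s(z, w) s(x, z) := (Sym2.eq_swap (a := z) (b := x)) ▸ h2
      exact hR.1.trans h (hR.1.symm h2')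
    · obtain ⟨v, hvz, hvw, hvx, hwv, hxv, g1, g2⟩ :=
        hR.2 z w x hzw.adj hxz.symm.adj
          (fun he => hxy.1.ne (by rw [← hwj, he])) h2
      have hv : v = upd w k (x k) := corner_unique hjk hzw hxz.symm hvz hwv hxv
      have hvy : v = y := by
        rw [hv]; funext i
        rcases eq_or_ne i k with rfl | hik
        · rw [upd_same]; exact hyk.symm
        · rw [upd_ne hik]; exact (hyw.2 i hik).symm
      rw [hvy] at g1
      exact hR.1.symm g1
  · have hyz : y ≠ z := fun he => hxy.1.ne ((congrFun he j).trans hzj).symm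
    obtain ⟨w', hwx, hwy, hwz, hyw', hzw', g1, g2⟩ :=
      hR.2 x y z hxy.adj hxz.adj hyz h
    have hw' : w' = upd y k (z k) := corner_unique hjk hxy hxz hwx hyw' hzw'
    have : w' = w := by
      rw [hw']; funext i
      rcases eq_or_ne i k with rfl | hik
      · rw [upd_same]; exact hwk.symm
      · rw [upd_ne hik]; exact hyw.2 i hik
    rw [this] at g1
    exact g1

theorem dir_lift {j : I} {a b : W j} (x : ∀ i, W i) (hab : (G j).Adj a b) :
    Dir G j (upd x j a) (upd x j b) :=
  ⟨by rw [upd_same, upd_same]; exact hab, fun i hi => by rw [upd_ne hi, upd_ne hi]⟩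

theorem dir_cross {j k : I} {a : W j} {u v : ∀ i, W i} (hkj : k ≠ j)
    (hk : (G k).Adj (u k) (v k)) (hoff : ∀ i, i ≠ k → u i = v i) :
    Dir G k (upd u j a) (upd v j a) := by
  refine ⟨by rw [upd_ne hkj, upd_ne hkj]; exact hk, fun i hi => ?_⟩
  rcases eq_or_ne i j with rfl | hij
  · rw [upd_same, upd_same]
  · rw [upd_ne hij, upd_ne hij]; exact hoff i hi

/-- Parallel transport: an RSP-relation on a connected product relates all translates
of a fixed factor edge. -/
theorem transport {R} (hR : IsRSP (cartProd G) R) (hpre : (cartProd G).Preconnected)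
    {j : I} {a b : W j} (hab : (G j).Adj a b) (x x' : ∀ i, W i) :
    R s(upd x j a, upd x j b) s(upd x' j a, upd x' j b) := by
  obtain ⟨p⟩ := hpre x x'
  induction p with
  | nil =>
    exact hR.1.refl _ ((cartProd G).mem_edgeSet.mpr (dir_lift _ hab).adj)
  | @cons u v _ h p ih =>
    obtain ⟨k, hk, hoff⟩ := h
    rcases eq_or_ne k j with rfl | hkj
    · have h1 : upd u k a = upd v k a := by
        funext i
        rcases eq_or_ne i k with rfl | hik
        · rw [upd_same, upd_same]
        · rw [upd_ne hik, upd_ne hik]; exact hoff i hik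
      have h2 : upd u k b = upd v k b := by
        funext i
        rcases eq_or_ne i k with rfl | hik
        · rw [upd_same, upd_same]
        · rw [upd_ne hik, upd_ne hik]; exact hoff i hik
      rw [h1, h2]; exact ih
    · refine hR.1.trans ?_ ih
      exact parallel hR (Ne.symm hkj) (dir_lift u hab) (dir_cross hkj hk hoff)
        (dir_lift v hab) (dir_cross hkj hk hoff)

theorem transport_edge {R} (hR : IsRSP (cartProd G) R)
    (hpre : (cartProd G).Preconnected) {j : I} {x y : ∀ i, W i} (hxy : Dir G j x y)
    (z : ∀ i, W i) : R s(x, y) s(upd z j (x j), upd z j (y j)) := by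
  have := transport hR hpre hxy.1 x z
  rwa [upd_self, hxy.upd_eq] at this

theorem lift_congr {j : I} (x0 : ∀ i, W i) {a b c d : W j} (h : s(a, b) = s(c, d)) :
    (s(upd x0 j a, upd x0 j b) : Sym2 (∀ i, W i)) = s(upd x0 j c, upd x0 j d) := by
  rcases Sym2.eq_iff.mp h with ⟨rfl, rfl⟩ | ⟨rfl, rfl⟩
  · rfl
  · exact Sym2.eq_swap


variable {I : Type*} {W : I → Type*} {G : ∀ i, SimpleGraph (W i)}

variable (G) in
/-- The projection of a relation on product edges to factor `j`, via lifts at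
basepoint `x0`. -/
def projRel (S : Sym2 (∀ i, W i) → Sym2 (∀ i, W i) → Prop) (x0 : ∀ i, W i) (j : I)
    (ea eb : Sym2 (W j)) : Prop :=
  ∃ a b c d, ea = s(a, b) ∧ eb = s(c, d) ∧ (G j).Adj a b ∧ (G j).Adj c d ∧
    S s(upd x0 j a, upd x0 j b) s(upd x0 j c, upd x0 j d)

theorem projRel_rsp {S} (hS : IsRSP (cartProd G) S) (x0 : ∀ i, W i) (j : I) :
    IsRSP (G j) (projRel G S x0 j) := by
  constructor
  · constructor
    · intro e he
      induction e using Sym2.ind with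
      | _ a b =>
        have hab : (G j).Adj a b := (G j).mem_edgeSet.mp he
        exact ⟨a, b, a, b, rfl, rfl, hab, hab,
          hS.1.refl _ ((cartProd G).mem_edgeSet.mpr (dir_lift x0 hab).adj)⟩
    · rintro e f ⟨a, b, c, d, he, hf, h1, h2, h3⟩
      exact ⟨c, d, a, b, hf, he, h2, h1, hS.1.symm h3⟩
    · rintro e f g ⟨a, b, c, d, he, hf, h1, h2, h3⟩ ⟨c', d', p, q, hf', hg, h1', h2', h3'⟩
      refine ⟨a, b, p, q, he, hg, h1, h2', ?_⟩
      rw [← lift_congr x0 (hf.symm.trans hf' : s(c, d) = s(c', d'))] at h3'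
      exact hS.1.trans h3 h3'
    · rintro e f ⟨a, b, c, d, he, hf, h1, h2, h3⟩
      rw [he]; exact (G j).mem_edgeSet.mpr h1
    · rintro e f ⟨a, b, c, d, he, hf, h1, h2, h3⟩
      rw [hf]; exact (G j).mem_edgeSet.mpr h2
  · intro a b c hab hac hbc hn
    have hd1 := dir_lift (G := G) x0 hab
    have hd2 := dir_lift (G := G) x0 hac
    have hne : upd x0 j b ≠ upd x0 j c := by
      intro h
      exact hbc (by rw [← upd_same x0 j b, ← upd_same x0 j c, h])
    have hnS : ¬ S s(upd x0 j a, upd x0 j b) s(upd x0 j a, upd x0 j c) := by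
      intro hS'
      exact hn ⟨a, b, a, c, rfl, rfl, hab, hac, hS'⟩
    obtain ⟨w, hwX, hwY, hwZ, hYw, hZw, g1, g2⟩ :=
      hS.2 _ _ _ hd1.adj hd2.adj hne hnS
    obtain ⟨hoff, hadj1, hadj2⟩ :=
      fiber_confine hd1 hd2 (by rw [upd_same, upd_same]; exact hbc) hYw hZw
    rw [upd_same] at hadj1 hadj2
    have hw : w = upd x0 j (w j) := by
      funext i
      rcases eq_or_ne i j with rfl | hij
      · rw [upd_same]
      · rw [upd_ne hij, hoff i hij, upd_ne hij]
    refine ⟨w j, ?_, ?_, ?_, hadj1, hadj2, ?_, ?_⟩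
    · intro h; exact hwX (by rw [hw, h])
    · intro h; exact hwY (by rw [hw, h])
    · intro h; exact hwZ (by rw [hw, h])
    · exact ⟨a, b, c, w j, rfl, rfl, hab, hadj2, by rwa [← hw]⟩
    · exact ⟨a, c, b, w j, rfl, rfl, hac, hadj1, by rwa [← hw]⟩

theorem prodRel_rsp {Rel : ∀ i, Sym2 (W i) → Sym2 (W i) → Prop}
    (hRel : ∀ i, IsRSP (G i) (Rel i)) : IsRSP (cartProd G) (prodRel G Rel) := by
  constructor
  · constructor
    · intro e he
      induction e using Sym2.ind with
      | _ x y =>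
        obtain ⟨j, h1, h2⟩ := (cartProd G).mem_edgeSet.mp he
        exact ⟨j, x, y, x, y, rfl, rfl, h1, h2, h1, h2,
          (hRel j).1.refl _ ((G j).mem_edgeSet.mpr h1)⟩
    · rintro e f ⟨j, x, y, u, v, he, hf, a1, a2, b1, b2, hr⟩
      exact ⟨j, u, v, x, y, hf, he, b1, b2, a1, a2, (hRel j).1.symm hr⟩
    · rintro e f g ⟨j, x, y, u, v, he, hf, a1, a2, b1, b2, hr⟩
        ⟨k, x', y', u', v', hf', hg, c1, c2, d1, d2, hr'⟩
      have heq : s(u, v) = s(x', y') := hf.symm.trans hf'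
      have hk : k = j := by
        by_contra hkj
        have h1 : u k = v k := b2 k hkj
        have h2 := sym2_proj k heq
        have h3 : s(u k, u k) = s(x' k, y' k) := by rw [← h1] at h2; exact h2
        exact c1.ne (sym2_both_eq h3)
      subst hk
      have h2 := sym2_proj k heq
      rw [← h2] at hr'
      exact ⟨k, x, y, u', v', he, hg, a1, a2, d1, d2, (hRel k).1.trans hr hr'⟩
    · rintro e f ⟨j, x, y, u, v, he, hf, a1, a2, b1, b2, hr⟩
      rw [he]; exact (cartProd G).mem_edgeSet.mpr ⟨j, a1, a2⟩
    · rintro e f ⟨j, x, y, u, v, he, hf, a1, a2, b1, b2, hr⟩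
      rw [hf]; exact (cartProd G).mem_edgeSet.mpr ⟨j, b1, b2⟩
  · intro x y z hxy hxz hyz hn
    obtain ⟨j, hj1, hj2⟩ := hxy
    obtain ⟨k, hk1, hk2⟩ := hxz
    have dxy : Dir G j x y := ⟨hj1, hj2⟩
    have dxz : Dir G k x z := ⟨hk1, hk2⟩
    rcases eq_or_ne j k with rfl | hjk
    · -- same direction
      have hyzj : y j ≠ z j := by
        intro h
        apply hyz
        funext i
        rcases eq_or_ne i j with rfl | hij
        · exact h
        · exact (hj2 i hij).symm.trans (hk2 i hij)
      have hnrel : ¬ Rel j s(x j, y j) s(x j, z j) := fun hr =>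
        hn ⟨j, x, y, x, z, rfl, rfl, hj1, hj2, hk1, hk2, hr⟩
      obtain ⟨d, hdx, hdy, hdz, had1, had2, hr1, hr2⟩ :=
        (hRel j).2 (x j) (y j) (z j) hj1 hk1 hyzj hnrel
      refine ⟨upd x j d, ?_, ?_, ?_, ?_, ?_, ?_, ?_⟩
      · intro h; exact hdx ((upd_same x j d).symm.trans (congrFun h j))
      · intro h; exact hdy ((upd_same x j d).symm.trans (congrFun h j))
      · intro h; exact hdz ((upd_same x j d).symm.trans (congrFun h j))
      · exact ⟨j, by rw [upd_same]; exact had1,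
          fun i hi => by rw [upd_ne hi]; exact (hj2 i hi).symm⟩
      · exact ⟨j, by rw [upd_same]; exact had2,
          fun i hi => by rw [upd_ne hi]; exact (hk2 i hi).symm⟩
      · exact ⟨j, x, y, z, upd x j d, rfl, rfl, hj1, hj2,
          by rw [upd_same]; exact had2,
          fun i hi => by rw [upd_ne hi]; exact (hk2 i hi).symm,
          by rw [upd_same]; exact hr1⟩
      · exact ⟨j, x, z, y, upd x j d, rfl, rfl, hk1, hk2,
          by rw [upd_same]; exact had1,
          fun i hi => by rw [upd_ne hi]; exact (hj2 i hi).symm,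
          by rw [upd_same]; exact hr2⟩
    · -- different directions : corner square
      have hkj : k ≠ j := hjk.symm
      have hwj : (upd y k (z k)) j = y j := upd_ne hjk y (z k)
      have hwk : (upd y k (z k)) k = z k := upd_same y k (z k)
      have hyk : y k = x k := (hj2 k hkj).symm
      have hzj : z j = x j := (hk2 j hjk).symm
      have dzw : Dir G j z (upd y k (z k)) := by
        refine ⟨by rw [hwj, hzj]; exact hj1, fun i hi => ?_⟩
        rcases eq_or_ne i k with rfl | hik
        · rw [upd_same]
        · rw [upd_ne hik]
          exact (hk2 i hik).symm.trans (hj2 i hi)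
      have dyw : Dir G k y (upd y k (z k)) := by
        refine ⟨by rw [hwk, hyk]; exact hk1, fun i hi => (upd_ne hi y (z k)).symm⟩
      refine ⟨upd y k (z k), ?_, ?_, ?_, dyw.adj, dzw.adj, ?_, ?_⟩
      · intro h; exact hj1.ne ((congrFun h j).symm.trans hwj)
      · intro h; exact hk1.ne (((hwk.symm.trans (congrFun h k)).trans hyk).symm)
      · intro h; exact hj1.ne (((hwj.symm.trans (congrFun h j)).trans hzj).symm)
      · exact ⟨j, x, y, z, upd y k (z k), rfl, rfl, hj1, hj2, dzw.1, dzw.2,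
          by rw [hwj, hzj]; exact (hRel j).1.refl _ ((G j).mem_edgeSet.mpr hj1)⟩
      · exact ⟨k, x, z, y, upd y k (z k), rfl, rfl, hk1, hk2, dyw.1, dyw.2,
          by rw [hwk, hyk]; exact (hRel k).1.refl _ ((G k).mem_edgeSet.mpr hk1)⟩

theorem prodRel_lift_proj {Rel : ∀ i, Sym2 (W i) → Sym2 (W i) → Prop}
    (x0 : ∀ i, W i) {j : I} {a b c d : W j} (hab : (G j).Adj a b)
    (h : prodRel G Rel s(upd x0 j a, upd x0 j b) s(upd x0 j c, upd x0 j d)) :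
    Rel j s(a, b) s(c, d) := by
  obtain ⟨k, x, y, u, v, he, hf, a1, a2, b1, b2, hrel⟩ := h
  have hk : k = j := by
    by_contra hkj
    have h1 : x j = y j := a2 j (fun h => hkj h.symm)
    have h2 := sym2_proj j he
    rw [upd_same, upd_same] at h2
    have h3 : s(y j, y j) = s(a, b) := by rw [h1] at h2; exact h2.symm
    exact hab.ne (sym2_both_eq h3)
  subst hk
  have h2 := sym2_proj k he
  have h3 := sym2_proj k hf
  rw [upd_same, upd_same] at h2 h3
  rw [h2, h3]
  exact hrel

theorem proj_of_rel {S} (hS : IsRSP (cartProd G) S)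
    (hpre : (cartProd G).Preconnected) (x0 : ∀ i, W i) {j : I} {x y u v : ∀ i, W i}
    (hxy : Dir G j x y) (huv : Dir G j u v) (h : S s(x, y) s(u, v)) :
    projRel G S x0 j s(x j, y j) s(u j, v j) :=
  ⟨x j, y j, u j, v j, rfl, rfl, hxy.1, huv.1,
    hS.1.trans (hS.1.symm (transport_edge hS hpre hxy x0))
      (hS.1.trans h (transport_edge hS hpre huv x0))⟩

theorem rel_of_proj {S} (hS : IsRSP (cartProd G) S)
    (hpre : (cartProd G).Preconnected) (x0 : ∀ i, W i) {j : I} {x y u v : ∀ i, W i}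
    (hxy : Dir G j x y) (huv : Dir G j u v)
    (h : projRel G S x0 j s(x j, y j) s(u j, v j)) : S s(x, y) s(u, v) := by
  obtain ⟨a, b, c, d, hea, hfc, hab, hcd, hlift⟩ := h
  have t1 := transport_edge hS hpre hxy x0
  have t2 := transport_edge hS hpre huv x0
  rw [lift_congr x0 hea] at t1
  rw [lift_congr x0 hfc] at t2
  exact hS.1.trans t1 (hS.1.trans hlift (hS.1.symm t2))

/-- A finest RSP-relation on a Cartesian product only relates edges of the same
factor direction. -/
theorem finest_sameDir {R} (hF : IsFinestRSP (cartProd G) R) {e f} (h : R e f) :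
    ∃ j, ∃ x y u v : ∀ i, W i, e = s(x, y) ∧ f = s(u, v) ∧ Dir G j x y ∧ Dir G j u v := by
  classical
  have hR := hF.1
  set S : Sym2 (∀ i, W i) → Sym2 (∀ i, W i) → Prop := fun e f =>
    R e f ∧ ∃ j, ∃ x y u v : ∀ i, W i, e = s(x, y) ∧ f = s(u, v) ∧
      Dir G j x y ∧ Dir G j u v with hSdef
  have hSR : ∀ e f, S e f → R e f := fun e f hs => hs.1
  have hSrsp : IsRSP (cartProd G) S := by
    constructor
    · constructor
      · intro e he
        refine ⟨hR.1.refl e he, ?_⟩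
        induction e using Sym2.ind with
        | _ x y =>
          obtain ⟨j, h1, h2⟩ := (cartProd G).mem_edgeSet.mp he
          exact ⟨j, x, y, x, y, rfl, rfl, ⟨h1, h2⟩, ⟨h1, h2⟩⟩
      · rintro e f ⟨h1, j, x, y, u, v, he, hf, d1, d2⟩
        exact ⟨hR.1.symm h1, j, u, v, x, y, hf, he, d2, d1⟩
      · rintro e f g ⟨h1, j, x, y, u, v, he, hf, d1, d2⟩
          ⟨h1', k, x', y', u', v', hf', hg, d1', d2'⟩
        refine ⟨hR.1.trans h1 h1', j, x, y, u', v', he, hg, d1, ?_⟩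
        have heq : s(u, v) = s(x', y') := hf.symm.trans hf'
        have hjk : j = k := by
          rcases Sym2.eq_iff.mp heq with ⟨rfl, rfl⟩ | ⟨rfl, rfl⟩
          · exact dir_unique d2 d1'
          · exact dir_unique d2 d1'.symm
        rw [hjk]; exact d2'
      · rintro e f ⟨h1, _⟩; exact hR.1.mem_left h1
      · rintro e f ⟨h1, _⟩; exact hR.1.mem_right h1
    · intro x y z hxy hxz hyz hn
      obtain ⟨j, hj1, hj2⟩ := hxy
      obtain ⟨k, hk1, hk2⟩ := hxz
      have dxy : Dir G j x y := ⟨hj1, hj2⟩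
      have dxz : Dir G k x z := ⟨hk1, hk2⟩
      rcases eq_or_ne j k with rfl | hjk
      · -- same direction: use R's square property
        have hnR : ¬ R s(x, y) s(x, z) := fun hr =>
          hn ⟨hr, j, x, y, x, z, rfl, rfl, dxy, dxz⟩
        obtain ⟨w, hwx, hwy, hwz, hyw, hzw, g1, g2⟩ :=
          hR.2 x y z dxy.adj dxz.adj hyz hnR
        have hyzj : y j ≠ z j := by
          intro hh
          apply hyz
          funext i
          rcases eq_or_ne i j with rfl | hij
          · exact hh
          · exact (hj2 i hij).symm.trans (hk2 i hij)
        obtain ⟨hoff, hadj1, hadj2⟩ := fiber_confine dxy dxz hyzj hyw hzw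
        have dzw : Dir G j z w :=
          ⟨hadj2, fun i hi => (hk2 i hi).symm.trans (hoff i hi).symm⟩
        have dyw : Dir G j y w :=
          ⟨hadj1, fun i hi => (hj2 i hi).symm.trans (hoff i hi).symm⟩
        exact ⟨w, hwx, hwy, hwz, hyw, hzw,
          ⟨g1, j, x, y, z, w, rfl, rfl, dxy, dzw⟩,
          ⟨g2, j, x, z, y, w, rfl, rfl, dxz, dyw⟩⟩
      · -- different directions: corner square, opposite sides related by `parallel`
        have hkj : k ≠ j := hjk.symm
        have hwj : (upd y k (z k)) j = y j := upd_ne hjk y (z k)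
        have hwk : (upd y k (z k)) k = z k := upd_same y k (z k)
        have hyk : y k = x k := (hj2 k hkj).symm
        have hzj : z j = x j := (hk2 j hjk).symm
        have dzw : Dir G j z (upd y k (z k)) := by
          refine ⟨by rw [hwj, hzj]; exact hj1, fun i hi => ?_⟩
          rcases eq_or_ne i k with rfl | hik
          · rw [upd_same]
          · rw [upd_ne hik]
            exact (hk2 i hik).symm.trans (hj2 i hi)
        have dyw : Dir G k y (upd y k (z k)) :=
          ⟨by rw [hwk, hyk]; exact hk1, fun i hi => (upd_ne hi y (z k)).symm⟩
        refine ⟨upd y k (z k), ?_, ?_, ?_, dyw.adj, dzw.adj, ?_, ?_⟩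
        · intro hh; exact hj1.ne ((congrFun hh j).symm.trans hwj)
        · intro hh; exact hk1.ne (((hwk.symm.trans (congrFun hh k)).trans hyk).symm)
        · intro hh; exact hj1.ne (((hwj.symm.trans (congrFun hh j)).trans hzj).symm)
        · exact ⟨parallel hR hjk dxy dxz dzw dyw,
            j, x, y, z, upd y k (z k), rfl, rfl, dxy, dzw⟩
        · exact ⟨parallel hR hkj dxz dxy dyw dzw,
            k, x, z, y, upd y k (z k), rfl, rfl, dxz, dyw⟩
  exact (hF.2 S hSrsp hSR e f h).2



end RSPAux
/-- `R` is a finest RSP-relation on a connected Cartesian product `□ᵢ Gᵢ` iff `R` is the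
product of finest RSP-relations on the factors. -/
theorem stmt6 {I : Type} [Fintype I] {W : I → Type} [∀ i, Fintype (W i)]
    (G : ∀ i, SimpleGraph (W i)) (hconn : (cartProd G).Connected)
    (R : Sym2 (∀ i, W i) → Sym2 (∀ i, W i) → Prop) :
    IsFinestRSP (cartProd G) R ↔
      ∃ Rel : ∀ i, Sym2 (W i) → Sym2 (W i) → Prop,
        (∀ i, IsFinestRSP (G i) (Rel i)) ∧ ∀ e f, R e f ↔ prodRel G Rel e f := by
  open RSPAux in
  constructor
  · -- forward direction
    intro hF
    have hR := hF.1
    have hpre := hconn.preconnected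
    obtain ⟨x0⟩ := hconn.nonempty
    set Rel : ∀ i, Sym2 (W i) → Sym2 (W i) → Prop :=
      fun j => RSPAux.projRel G R x0 j with hReldef
    have hiff : ∀ e f, R e f ↔ prodRel G Rel e f := by
      intro e f
      constructor
      · intro h
        obtain ⟨j, x, y, u, v, he, hf, dxy, duv⟩ := RSPAux.finest_sameDir hF h
        exact ⟨j, x, y, u, v, he, hf, dxy.1, dxy.2, duv.1, duv.2,
          RSPAux.proj_of_rel hR hpre x0 dxy duv (by rw [← he, ← hf]; exact h)⟩
      · rintro ⟨j, x, y, u, v, he, hf, a1, a2, b1, b2, hrel⟩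
        rw [he, hf]
        exact RSPAux.rel_of_proj hR hpre x0 ⟨a1, a2⟩ ⟨b1, b2⟩ hrel
    refine ⟨Rel, fun j => ⟨RSPAux.projRel_rsp hR x0 j, ?_⟩, hiff⟩
    -- finestness of each factor relation
    intro Sj hSj hsub ea eb hab
    set Rel' : ∀ i, Sym2 (W i) → Sym2 (W i) → Prop := RSPAux.upd Rel j Sj with hRel'
    have hRel'rsp : ∀ i, IsRSP (G i) (Rel' i) := by
      intro i
      rcases eq_or_ne i j with rfl | hij
      · rw [hRel', RSPAux.upd_same]; exact hSj
      · rw [hRel', RSPAux.upd_ne hij]; exact RSPAux.projRel_rsp hR x0 i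
    have hS'R : ∀ e f, prodRel G Rel' e f → R e f := by
      rintro e f ⟨k, x, y, u, v, he, hf, a1, a2, b1, b2, hrel⟩
      rcases eq_or_ne k j with rfl | hkj
      · rw [hRel', RSPAux.upd_same] at hrel
        exact (hiff e f).mpr ⟨k, x, y, u, v, he, hf, a1, a2, b1, b2, hsub _ _ hrel⟩
      · rw [hRel', RSPAux.upd_ne hkj] at hrel
        exact (hiff e f).mpr ⟨k, x, y, u, v, he, hf, a1, a2, b1, b2, hrel⟩
    have hRS' := hF.2 (prodRel G Rel') (RSPAux.prodRel_rsp hRel'rsp) hS'R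
    obtain ⟨a, b, cc, d, hea, heb, hab', hcd', hlift⟩ := hab
    have h2 := hRS' _ _ hlift
    have h3 := RSPAux.prodRel_lift_proj x0 hab' h2
    rw [hRel', RSPAux.upd_same] at h3
    rw [hea, heb]
    exact h3
  · -- backward direction
    rintro ⟨Rel, hRel, hiff⟩
    have hpre := hconn.preconnected
    obtain ⟨x0⟩ := hconn.nonempty
    have hReq : R = prodRel G Rel := by
      funext e f; exact propext (hiff e f)
    have hprsp : IsRSP (cartProd G) (prodRel G Rel) :=
      RSPAux.prodRel_rsp (fun i => (hRel i).1)
    constructor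
    · rw [hReq]; exact hprsp
    · intro S hS hSR e f hRef
      have hSsub : ∀ j ea eb, RSPAux.projRel G S x0 j ea eb → Rel j ea eb := by
        rintro j ea eb ⟨a, b, c, d, hea, heb, hab, hcd, hlift⟩
        have h1 := hSR _ _ hlift
        rw [hReq] at h1
        have h2 := RSPAux.prodRel_lift_proj x0 hab h1
        rw [hea, heb]; exact h2
      have hfin : ∀ j ea eb, Rel j ea eb → RSPAux.projRel G S x0 j ea eb := fun j =>
        (hRel j).2 _ (RSPAux.projRel_rsp hS x0 j) (hSsub j)
      rw [hReq] at hRef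
      obtain ⟨j, x, y, u, v, he, hf, a1, a2, b1, b2, hrel⟩ := hRef
      rw [he, hf]
      exact RSPAux.rel_of_proj hS hpre x0 ⟨a1, a2⟩ ⟨b1, b2⟩ (hfin j _ _ hrel)
end

section
/- Let G be a graph with a well-behaved RSP-relation R, φ a class of R, and G_φ^x, G_φ^y two distinct adjacent φ-layers. Then the graph C_{G_φ^x, G_φ^y} (vertices: edges of G joining the two layers; adjacency: being opposite edges of a square with one side in each layer) is a covering graph of G_φ^x, via the map [a,b] ↦ a, which is locally bijective. -/
open SimpleGraph

variable {V : Type*}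

/-- `R` is well-behaved on `G`: no `K_{2,3}`-subgraph of `G` (canonical bipartition
`{x,y}, {a,b,c}`) has a forbidden coloring, i.e., edges `[a,x], [x,c], [y,b]` in one class
and the remaining three edges outside that class. -/
def WellBehaved (G : SimpleGraph V) (R : Sym2 V → Sym2 V → Prop) : Prop :=
  ¬ ∃ x y a b c : V, x ≠ y ∧ a ≠ b ∧ a ≠ c ∧ b ≠ c ∧
    G.Adj x a ∧ G.Adj x b ∧ G.Adj x c ∧ G.Adj y a ∧ G.Adj y b ∧ G.Adj y c ∧
    R s(a, x) s(x, c) ∧ R s(a, x) s(y, b) ∧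
    ¬ R s(a, x) s(x, b) ∧ ¬ R s(a, x) s(a, y) ∧ ¬ R s(a, x) s(c, y)

/-- The graph `C_{G_φ^x, G_φ^y}`: vertices are the edges of `G` joining the `φ`-layer of `x`
to the `φ`-layer of `y` (encoded as ordered pairs with first endpoint in the layer of `x`);
two such edges are adjacent iff they are opposite edges of a square whose other two opposite
edges lie in `φ`, one in each layer. -/
def coverGraph (G : SimpleGraph V) (φ : Set (Sym2 V)) (x y : V) :
    SimpleGraph {p : V × V //
      (G.deleteEdges φᶜ).Reachable x p.1 ∧ (G.deleteEdges φᶜ).Reachable y p.2 ∧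
      G.Adj p.1 p.2} where
  Adj p q :=
    G.Adj p.1.1 q.1.1 ∧ s(p.1.1, q.1.1) ∈ φ ∧ G.Adj p.1.2 q.1.2 ∧ s(p.1.2, q.1.2) ∈ φ
  symm := by
    constructor
    rintro p q ⟨h1, h2, h3, h4⟩
    exact ⟨h1.symm, by rwa [Sym2.eq_swap], h3.symm, by rwa [Sym2.eq_swap]⟩
  loopless := by
    constructor
    rintro p ⟨h1, -⟩
    exact G.loopless.irrefl _ h1

/-- For a well-behaved RSP-relation `R` on `G`, a class `φ` and two distinct adjacent
`φ`-layers, the map `[a,b] ↦ a` from `C_{G_φ^x,G_φ^y}` to the layer `G_φ^x` is a covering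
map: a locally bijective homomorphism. -/
theorem stmt13 (G : SimpleGraph V) (R : Sym2 V → Sym2 V → Prop) (hR : IsRSP G R)
    (hwb : WellBehaved G R)
    (e₀ : Sym2 V) (he₀ : e₀ ∈ G.edgeSet) (x y : V)
    (hdist : ¬ (G.deleteEdges {e | R e₀ e}ᶜ).Reachable x y)
    (hadj : ∃ a b : V, (G.deleteEdges {e | R e₀ e}ᶜ).Reachable x a ∧
      (G.deleteEdges {e | R e₀ e}ᶜ).Reachable y b ∧ G.Adj a b) :
    (∀ p q, (coverGraph G {e | R e₀ e} x y).Adj p q →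
      (G.deleteEdges {e | R e₀ e}ᶜ).Adj p.val.1 q.val.1) ∧
    (∀ p (c : V), (G.deleteEdges {e | R e₀ e}ᶜ).Adj p.val.1 c →
      ∃ q, (coverGraph G {e | R e₀ e} x y).Adj p q ∧ q.val.1 = c) ∧
    (∀ p q₁ q₂, (coverGraph G {e | R e₀ e} x y).Adj p q₁ →
      (coverGraph G {e | R e₀ e} x y).Adj p q₂ → q₁.val.1 = q₂.val.1 → q₁ = q₂) := by
  classical
  obtain ⟨hEq, hsq⟩ := hR
  set φ : Set (Sym2 V) := {e | R e₀ e} with hφ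
  have key : ∀ u v : V, (G.deleteEdges φᶜ).Reachable x u →
      (G.deleteEdges φᶜ).Reachable y v → s(u, v) ∉ φ := by
    intro u v hu hv huv
    have hGuv : G.Adj u v := (G.mem_edgeSet).1 (hEq.mem_right huv)
    have : (G.deleteEdges φᶜ).Adj u v := by
      rw [SimpleGraph.deleteEdges_adj]
      exact ⟨hGuv, not_not_intro huv⟩
    exact hdist (hu.trans (this.reachable.trans hv.symm))
  refine ⟨?_, ?_, ?_⟩
  · rintro p q ⟨h1, h2, -, -⟩
    rw [SimpleGraph.deleteEdges_adj]
    exact ⟨h1, not_not_intro h2⟩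
  · rintro ⟨⟨a, b⟩, hxa, hyb, hab⟩ c hac
    rw [SimpleGraph.deleteEdges_adj] at hac
    obtain ⟨hGac, hac'⟩ := hac
    have hacφ : s(a, c) ∈ φ := not_not.1 hac'
    have habφ : s(a, b) ∉ φ := key a b hxa hyb
    have hbc : b ≠ c := by rintro rfl; exact habφ hacφ
    have hnR : ¬ R s(a, b) s(a, c) := fun h => habφ (hEq.trans hacφ (hEq.symm h))
    obtain ⟨w, hwa, hwb, hwc, hbw, hcw, h1, h2⟩ := hsq a b c hab hGac hbc hnR
    have hbwφ : s(b, w) ∈ φ := hEq.trans hacφ h2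
    refine ⟨⟨(c, w), hxa.trans (SimpleGraph.Adj.reachable ?_),
      hyb.trans (SimpleGraph.Adj.reachable ?_), hcw⟩, ⟨hGac, hacφ, hbw, hbwφ⟩, rfl⟩
    · rw [SimpleGraph.deleteEdges_adj]; exact ⟨hGac, not_not_intro hacφ⟩
    · rw [SimpleGraph.deleteEdges_adj]; exact ⟨hbw, not_not_intro hbwφ⟩
  · rintro ⟨⟨a, b⟩, hxa, hyb, hab⟩ ⟨⟨c, d₁⟩, hxc, hyd₁, hcd₁⟩ ⟨⟨c₂, d₂⟩, hxc₂, hyd₂, hcd₂⟩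
      ⟨hac, hacφ, hbd₁, hbd₁φ⟩ ⟨hac₂, hac₂φ, hbd₂, hbd₂φ⟩ hfst
    simp only at hfst
    subst hfst
    have hyd₁' : (G.deleteEdges φᶜ).Reachable y d₁ := hyb.trans
      (SimpleGraph.Adj.reachable (by rw [SimpleGraph.deleteEdges_adj]; exact ⟨hbd₁, not_not_intro hbd₁φ⟩))
    have hyd₂' : (G.deleteEdges φᶜ).Reachable y d₂ := hyb.trans
      (SimpleGraph.Adj.reachable (by rw [SimpleGraph.deleteEdges_adj]; exact ⟨hbd₂, not_not_intro hbd₂φ⟩))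
    have habφ : s(a, b) ∉ φ := key a b hxa hyb
    have hcd₁φ : s(c, d₁) ∉ φ := key c d₁ hxc hyd₁'
    have hcd₂φ : s(c, d₂) ∉ φ := key c d₂ hxc hyd₂'
    have hd : d₁ = d₂ := by
      by_contra hne
      apply hwb
      have e1 : R e₀ s(d₁, b) := by rwa [Sym2.eq_swap] at hbd₁φ
      refine ⟨b, c, d₁, a, d₂, ?_, ?_, hne, ?_, hbd₁, hab.symm, hbd₂, hcd₁, hac.symm, hcd₂,
        ?_, ?_, ?_, ?_, ?_⟩
      · rintro rfl; exact habφ hacφ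
      · rintro rfl; exact habφ (by rwa [Sym2.eq_swap] at hbd₁φ)
      · rintro rfl; exact habφ (by rwa [Sym2.eq_swap] at hbd₂φ)
      · exact hEq.trans (hEq.symm e1) hbd₂φ
      · exact hEq.trans (hEq.symm e1) (by rwa [Sym2.eq_swap] at hacφ)
      · intro h
        exact habφ (by rw [Sym2.eq_swap]; exact hEq.trans e1 h)
      · intro h
        exact hcd₁φ (by rw [Sym2.eq_swap]; exact hEq.trans e1 h)
      · intro h
        exact hcd₂φ (by rw [Sym2.eq_swap]; exact hEq.trans e1 h)
    subst hd
    rfl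
end
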